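/- Let n be a positive integer and let Δ be a real symmetric 2n×2n matrix with Δ ≥ iΩ_n. Then for every vector v ∈ ℂ^{2n} with ‖v‖ = 1, one has ⟨v, Δv⟩ · ⟨v, Ω_n Δ Ω_nᵀ v⟩ ≥ 1, where ⟨·,·⟩ denotes the standard Hermitian inner product on ℂ^{2n} (both inner products are real since Δ and Ω_n Δ Ω_nᵀ are real symmetric). -/

import Mathlib

open Matrix Complex ComplexOrder

/-- The standard symplectic form on `n` modes: block-diagonal with `n` blocks `[[0,1],[-1,0]]`. -/
noncomputable def OmegaM (n : ℕ) : Matrix (Fin (2*n)) (Fin (2*n)) ℝ :=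
  Matrix.of fun i j =>
    if i.val + 1 = j.val ∧ i.val % 2 = 0 then (1 : ℝ)
    else if j.val + 1 = i.val ∧ j.val % 2 = 0 then -1 else 0

/-- Complexification of a real matrix. -/
noncomputable def cplx {m p : Type*} (M : Matrix m p ℝ) : Matrix m p ℂ :=
  M.map (fun x => (x : ℂ))

lemma OmegaM_transpose (n : ℕ) : (OmegaM n)ᵀ = - OmegaM n := by
  ext i j
  simp only [OmegaM, transpose_apply, of_apply, Matrix.neg_apply]
  split_ifs <;> first | (exfalso; omega) | norm_num

lemma OmegaM_mul_self (n : ℕ) : OmegaM n * OmegaM n = -1 := by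
  ext i j
  rw [mul_apply]
  rcases Nat.mod_two_eq_zero_or_one i.val with hi | hi
  · -- i even
    have hk : i.val + 1 < 2 * n := by omega
    rw [Finset.sum_eq_single (⟨i.val + 1, hk⟩ : Fin (2*n))]
    · simp only [OmegaM, of_apply, Matrix.neg_apply, Matrix.one_apply, Fin.ext_iff, true_and]
      split_ifs <;> first | (exfalso; omega) | norm_num
    · intro b _ hb
      have hb' : b.val ≠ i.val + 1 := fun hh => hb (Fin.ext hh)
      have : OmegaM n i b = 0 := by
        simp only [OmegaM, of_apply]
        split_ifs with h1 h2
        · exact absurd h1.1 (fun hh => hb' hh.symm)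
        · exact absurd rfl (by omega : ¬ (0:ℕ) = 0)
        · rfl
      rw [this, zero_mul]
    · intro hmem; exact absurd (Finset.mem_univ _) hmem
  · -- i odd
    have hk : i.val - 1 < 2 * n := by omega
    rw [Finset.sum_eq_single (⟨i.val - 1, hk⟩ : Fin (2*n))]
    · simp only [OmegaM, of_apply, Matrix.neg_apply, Matrix.one_apply, Fin.ext_iff, true_and]
      split_ifs <;> first | (exfalso; omega) | norm_num
    · intro b _ hb
      have hb' : b.val ≠ i.val - 1 := fun hh => hb (Fin.ext hh)
      have : OmegaM n i b = 0 := by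
        simp only [OmegaM, of_apply]
        split_ifs with h1 h2
        · exact absurd h1.2 (by omega)
        · exact absurd h2 (by omega)
        · rfl
      rw [this, zero_mul]
    · intro hmem; exact absurd (Finset.mem_univ _) hmem

lemma cplx_transpose' {m p : Type*} (M : Matrix m p ℝ) : (cplx M)ᵀ = cplx Mᵀ := rfl

lemma cplx_neg {m p : Type*} (M : Matrix m p ℝ) : cplx (-M) = -cplx M := by
  ext i j; simp [cplx]

lemma cplx_mul {m : Type*} [Fintype m] (M N : Matrix m m ℝ) :
    cplx (M * N) = cplx M * cplx N := by
  ext i j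
  simp only [cplx, map_apply, mul_apply]
  push_cast
  rfl

lemma cplx_conjTranspose {m p : Type*} (M : Matrix m p ℝ) : (cplx M)ᴴ = cplx Mᵀ := by
  ext i j
  simp [cplx, conjTranspose_apply, Complex.conj_ofReal]

lemma cplx_one {m : Type*} [Fintype m] [DecidableEq m] : cplx (1 : Matrix m m ℝ) = 1 := by
  ext i j
  simp [cplx, one_apply]
  split_ifs <;> norm_num

lemma dot_cs {m : Type*} [Fintype m] {M : Matrix m m ℂ} (hM : M.PosSemidef) (x y : m → ℂ) :
    ‖star x ⬝ᵥ (M *ᵥ y)‖ ^ 2 ≤ (star x ⬝ᵥ (M *ᵥ x)).re * (star y ⬝ᵥ (M *ᵥ y)).re := by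
  classical
  open MatrixOrder in obtain ⟨B, rfl⟩ := CStarAlgebra.nonneg_iff_eq_star_mul_self.mp hM.nonneg
  rw [star_eq_conjTranspose]
  have key : ∀ a b : m → ℂ, star a ⬝ᵥ ((Bᴴ * B) *ᵥ b) = star (B *ᵥ a) ⬝ᵥ (B *ᵥ b) := by
    intro a b
    rw [← Matrix.mulVec_mulVec, Matrix.dotProduct_mulVec, ← Matrix.star_mulVec]
  rw [key, key, key]
  set P : EuclideanSpace ℂ m := (WithLp.equiv 2 (m → ℂ)).symm (B *ᵥ x) with hP
  set Q : EuclideanSpace ℂ m := (WithLp.equiv 2 (m → ℂ)).symm (B *ᵥ y) with hQ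
  have hinner : ∀ a b : EuclideanSpace ℂ m,
      star (WithLp.equiv 2 (m → ℂ) a) ⬝ᵥ (WithLp.equiv 2 (m → ℂ) b) = @inner ℂ _ _ a b := by
    intro a b
    simp [PiLp.inner_apply, dotProduct, mul_comm]
  have e1 : star (B *ᵥ x) ⬝ᵥ (B *ᵥ y) = @inner ℂ _ _ P Q := hinner P Q
  have e2 : star (B *ᵥ x) ⬝ᵥ (B *ᵥ x) = @inner ℂ _ _ P P := hinner P P
  have e3 : star (B *ᵥ y) ⬝ᵥ (B *ᵥ y) = @inner ℂ _ _ Q Q := hinner Q Q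
  have h2 : (@inner ℂ _ _ P P).re = ‖P‖ ^ 2 := by
    have := inner_self_eq_norm_sq (𝕜 := ℂ) P
    simpa [RCLike.re_to_complex] using this
  have h3 : (@inner ℂ _ _ Q Q).re = ‖Q‖ ^ 2 := by
    have := inner_self_eq_norm_sq (𝕜 := ℂ) Q
    simpa [RCLike.re_to_complex] using this
  rw [e1, e2, e3, h2, h3]
  have h1 := norm_inner_le_norm (𝕜 := ℂ) P Q
  calc ‖@inner ℂ _ _ P Q‖ ^ 2 ≤ (‖P‖ * ‖Q‖) ^ 2 := by
        apply pow_le_pow_left₀ (norm_nonneg _) h1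
    _ = ‖P‖ ^ 2 * ‖Q‖ ^ 2 := by ring

/-- If `Δ ≥ iΩ_n`, then for every unit vector `v ∈ ℂ^{2n}` one has
`⟨v, Δv⟩ · ⟨v, ΩΔΩᵀ v⟩ ≥ 1` (both inner products being real). -/
theorem product_inequality
    (n : ℕ) (hn : 0 < n) (Δ : Matrix (Fin (2*n)) (Fin (2*n)) ℝ)
    (hΔsymm : Δ.IsSymm)
    (h : (cplx Δ - Complex.I • cplx (OmegaM n)).PosSemidef) :
    ∀ v : Fin (2*n) → ℂ, star v ⬝ᵥ v = 1 →
      1 ≤ (star v ⬝ᵥ (cplx Δ *ᵥ v)).re *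
            (star v ⬝ᵥ (cplx (OmegaM n * Δ * (OmegaM n)ᵀ) *ᵥ v)).re := by
  intro v hv
  classical
  set N : Matrix (Fin (2*n)) (Fin (2*n)) ℂ := cplx (OmegaM n) with hNdef
  set D : Matrix (Fin (2*n)) (Fin (2*n)) ℂ := cplx Δ with hDdef
  have hNT : Nᵀ = -N := by
    rw [hNdef, cplx_transpose', OmegaM_transpose, cplx_neg]
  have hNNT : N * Nᵀ = 1 := by
    rw [hNT, hNdef, mul_neg, ← cplx_mul, OmegaM_mul_self, cplx_neg, cplx_one, neg_neg]
  have hDT : Dᵀ = D := by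
    rw [hDdef, cplx_transpose', hΔsymm.eq]
  -- the partner vector
  set w : Fin (2*n) → ℂ := Nᵀ *ᵥ v with hwdef
  have hNH : Nᴴ = -N := by
    rw [hNdef, cplx_conjTranspose, OmegaM_transpose, cplx_neg]
  have hsw : star w = star v ᵥ* N := by
    rw [hwdef, star_mulVec]
    congr 1
    rw [hNT, conjTranspose_neg, hNH, neg_neg]
  have hNw : N *ᵥ w = v := by
    rw [hwdef, mulVec_mulVec, hNNT, one_mulVec]
  -- quantities
  set A : ℂ := star v ⬝ᵥ (D *ᵥ v) with hA
  set s : ℂ := star v ⬝ᵥ (N *ᵥ v) with hs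
  set c : ℂ := star v ⬝ᵥ (D *ᵥ w) with hc
  set Bq : ℂ := star w ⬝ᵥ (D *ᵥ w) with hBq
  -- identify the second factor in the goal
  have hgoal2 : star v ⬝ᵥ (cplx (OmegaM n * Δ * (OmegaM n)ᵀ) *ᵥ v) = Bq := by
    rw [cplx_mul, cplx_mul, ← cplx_transpose', ← hNdef, ← hDdef]
    rw [← mulVec_mulVec, ← mulVec_mulVec, dotProduct_mulVec, ← hsw, hBq, hwdef,
      dotProduct_mulVec]
  rw [hgoal2]
  -- auxiliary dot product identities
  have hvNw : star v ⬝ᵥ (N *ᵥ w) = 1 := by rw [hNw]; exact hv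
  have hwNw : star w ⬝ᵥ (N *ᵥ w) = s := by
    rw [hNw, hsw, hs, dotProduct_mulVec]
  -- expansions of the quadratic forms
  have expand1 : ∀ x y : Fin (2*n) → ℂ, star x ⬝ᵥ ((D - Complex.I • N) *ᵥ y)
      = star x ⬝ᵥ (D *ᵥ y) - Complex.I * (star x ⬝ᵥ (N *ᵥ y)) := by
    intro x y
    rw [sub_mulVec, dotProduct_sub, smul_mulVec, dotProduct_smul, smul_eq_mul]
  have expand2 : ∀ x y : Fin (2*n) → ℂ, star x ⬝ᵥ ((D + Complex.I • N) *ᵥ y)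
      = star x ⬝ᵥ (D *ᵥ y) + Complex.I * (star x ⬝ᵥ (N *ᵥ y)) := by
    intro x y
    rw [add_mulVec, dotProduct_add, smul_mulVec, dotProduct_smul, smul_eq_mul]
  -- second PSD matrix
  have h2 : (D + Complex.I • N).PosSemidef := by
    have ht := h.transpose
    have : (D - Complex.I • N)ᵀ = D + Complex.I • N := by
      rw [transpose_sub, transpose_smul, hNT, hDT, smul_neg, sub_neg_eq_add]
    rwa [this] at ht
  -- real quantities
  set a : ℝ := A.re with ha
  set b : ℝ := Bq.re with hb
  set t : ℝ := s.im with htdef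
  -- the four 1x1 positivity facts
  have re1 : ∀ z₁ z₂ : ℂ, (z₁ - Complex.I * z₂).re = z₁.re + z₂.im := by
    intro z₁ z₂; simp [Complex.sub_re, Complex.mul_re]
  have re2 : ∀ z₁ z₂ : ℂ, (z₁ + Complex.I * z₂).re = z₁.re - z₂.im := by
    intro z₁ z₂; simp [Complex.add_re, Complex.mul_re]; ring
  have i1 : 0 ≤ a + t := by
    have := h.dotProduct_mulVec_nonneg v
    rw [Complex.nonneg_iff] at this
    have h' := this.1
    rwa [expand1 v v, ← hA, ← hs, re1] at h'
  have i2 : 0 ≤ b + t := by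
    have := h.dotProduct_mulVec_nonneg w
    rw [Complex.nonneg_iff] at this
    have h' := this.1
    rwa [expand1 w w, ← hBq, hwNw, re1] at h'
  have i3 : 0 ≤ a - t := by
    have := h2.dotProduct_mulVec_nonneg v
    rw [Complex.nonneg_iff] at this
    have h' := this.1
    rwa [expand2 v v, ← hA, ← hs, re2] at h'
  have i4 : 0 ≤ b - t := by
    have := h2.dotProduct_mulVec_nonneg w
    rw [Complex.nonneg_iff] at this
    have h' := this.1
    rwa [expand2 w w, ← hBq, hwNw, re2] at h'
  -- the Cauchy-Schwarz facts
  have i5 : ‖c - Complex.I‖ ^ 2 ≤ (a + t) * (b + t) := by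
    have := dot_cs h v w
    rwa [expand1 v w, expand1 v v, expand1 w w, ← hc, hvNw, mul_one, ← hA, ← hs,
      hwNw, ← hBq, re1, re1] at this
  have i6 : ‖c + Complex.I‖ ^ 2 ≤ (a - t) * (b - t) := by
    have := dot_cs h2 v w
    rwa [expand2 v w, expand2 v v, expand2 w w, ← hc, hvNw, mul_one, ← hA, ← hs,
      hwNw, ← hBq, re2, re2] at this
  -- triangle inequality
  have i7 : 2 ≤ ‖c - Complex.I‖ + ‖c + Complex.I‖ := by
    have h8 := norm_sub_le (c + Complex.I) (c - Complex.I)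
    have he : (c + Complex.I) - (c - Complex.I) = 2 * Complex.I := by ring
    rw [he] at h8
    have h9 : ‖(2 : ℂ) * Complex.I‖ = 2 := by
      simp
    rw [h9] at h8
    linarith
  set d₁ : ℝ := ‖c - Complex.I‖ with hd1
  set d₂ : ℝ := ‖c + Complex.I‖ with hd2
  have hd1n : 0 ≤ d₁ := norm_nonneg _
  have hd2n : 0 ≤ d₂ := norm_nonneg _
  have habt : t ^ 2 ≤ a * b := by nlinarith [mul_nonneg i1 i4, mul_nonneg i3 i2]
  have hdd : d₁ * d₂ ≤ a * b - t ^ 2 := by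
    have hsq : (d₁ * d₂) ^ 2 ≤ (a * b - t ^ 2) ^ 2 := by
      nlinarith [i5, i6, sq_nonneg (d₁*d₂), sq_nonneg ((a-b)*t), mul_nonneg i1 i2,
        mul_nonneg i3 i4, mul_le_mul i5 i6 (sq_nonneg _) (mul_nonneg i1 i2)]
    have : 0 ≤ a * b - t ^ 2 := by linarith
    nlinarith [mul_nonneg hd1n hd2n]
  nlinarith [i5, i6, i7, hdd, mul_nonneg hd1n hd2n, sq_nonneg (d₁ + d₂ - 2)]
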